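/- Multicomponent bathtub principle, existence part: the linear functional 𝓕(s) = ∫_Ω F·s dx admits a minimizer over the constraint set 𝒳 ∩ 𝒜. -/

import Mathlib

set_option linter.unusedSectionVars false
set_option linter.unusedVariables false
set_option maxHeartbeats 1000000

open MeasureTheory
open scoped ENNReal

section BathtubGaleSection
open scoped Classical
open Finset

namespace BathtubGale

variable {σ : Type*} [Fintype σ] [DecidableEq σ]

noncomputable def cutSum (a : Finset σ → ℝ) (I : Finset σ) : ℝ :=
  ∑ A ∈ Finset.univ.filter (fun A : Finset σ => A ⊆ I), a A

structure GaleData (S : Finset σ) (a : Finset σ → ℝ) (m : σ → ℝ) : Prop where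
  ha : ∀ A, 0 ≤ a A
  hsupp : ∀ A, a A ≠ 0 → A.Nonempty ∧ A ⊆ S
  hm : ∀ i, 0 ≤ m i
  hcut : ∀ I, I ⊆ S → cutSum a I ≤ ∑ i ∈ I, m i
  htot : ∑ i ∈ S, m i ≤ cutSum a S

structure GaleSol (S : Finset σ) (a : Finset σ → ℝ) (m : σ → ℝ)
    (x : Finset σ → σ → ℝ) : Prop where
  nonneg : ∀ A i, 0 ≤ x A i
  supp : ∀ A i, i ∉ A → x A i = 0
  row : ∀ A, ∑ i, x A i = a A
  col : ∀ i ∈ S, ∑ A, x A i = m i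

noncomputable def liveCount (S : Finset σ) (a : Finset σ → ℝ) (m : σ → ℝ) : ℕ :=
  ((Finset.univ : Finset (Finset σ)).filter (fun A => a A ≠ 0)).card
    + (S.filter (fun i => m i ≠ 0)).card

theorem gale_zero {S : Finset σ} {a : Finset σ → ℝ} {m : σ → ℝ}
    (hD : GaleData S a m) (hz : ∀ A, a A = 0) :
    GaleSol S a m (fun _ _ => 0) := by
  have hc : cutSum a S = 0 := Finset.sum_eq_zero fun A _ => hz A
  have hms : ∀ i ∈ S, m i = 0 := by
    have h0 : ∑ i ∈ S, m i = 0 :=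
      le_antisymm (hc ▸ hD.htot) (Finset.sum_nonneg fun i _ => hD.hm i)
    intro i hi
    exact (Finset.sum_eq_zero_iff_of_nonneg (fun j _ => hD.hm j)).1 h0 i hi
  exact ⟨fun _ _ => le_rfl, fun _ _ _ => rfl,
    fun A => by simp [hz A], fun i hi => by simp [hms i hi]⟩

theorem gale_route {S : Finset σ} {a : Finset σ → ℝ} {m : σ → ℝ}
    {A₀ : Finset σ} {i₀ : σ} (hi₀ : i₀ ∈ A₀) {ε : ℝ}
    {x : Finset σ → σ → ℝ}
    (hx : GaleSol S (Function.update a A₀ (a A₀ - ε)) (Function.update m i₀ (m i₀ - ε)) x)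
    (hi₀S : i₀ ∈ S) (hε : 0 ≤ ε) :
    GaleSol S a m (fun A i => x A i + if A = A₀ ∧ i = i₀ then ε else 0) := by
  constructor
  · intro A i
    have := hx.nonneg A i
    split <;> [linarith; linarith]
  · intro A i hi
    have h1 := hx.supp A i hi
    have h2 : ¬(A = A₀ ∧ i = i₀) := by
      rintro ⟨rfl, rfl⟩; exact hi hi₀
    simp [h1, h2]
  · intro A
    rw [Finset.sum_add_distrib, hx.row A]
    have : ∑ i, (if A = A₀ ∧ i = i₀ then ε else 0) = if A = A₀ then ε else 0 := by
      by_cases hA : A = A₀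
      · simp [hA]
      · simp [hA]
    rw [this]
    by_cases hA : A = A₀
    · subst hA; simp [Function.update_self]
    · simp [hA, Function.update_of_ne hA]
  · intro i hi
    rw [Finset.sum_add_distrib, hx.col i hi]
    have : ∑ A : Finset σ, (if A = A₀ ∧ i = i₀ then ε else 0) = if i = i₀ then ε else 0 := by
      by_cases hii : i = i₀
      · simp [hii]
      · simp [hii]
    rw [this]
    by_cases hii : i = i₀
    · subst hii; simp [Function.update_self]
    · simp [hii, Function.update_of_ne hii]


lemma sdiff_subset_iff' {A I I' : Finset σ} : A \ I ⊆ I' ↔ A ⊆ I ∪ I' := by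
  constructor
  · intro h x hx
    by_cases hxI : x ∈ I
    · exact Finset.mem_union.2 (Or.inl hxI)
    · exact Finset.mem_union.2 (Or.inr (h (Finset.mem_sdiff.2 ⟨hx, hxI⟩)))
  · intro h x hx
    rcases Finset.mem_sdiff.1 hx with ⟨hxA, hxI⟩
    rcases Finset.mem_union.1 (h hxA) with h1 | h2
    · exact absurd h1 hxI
    · exact h2

/-- A `GaleSol` has zero rows on null classes. -/
lemma GaleSol.row_zero {S : Finset σ} {a : Finset σ → ℝ} {m : σ → ℝ}
    {x : Finset σ → σ → ℝ} (hx : GaleSol S a m x) {A : Finset σ} (hA : a A = 0) :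
    ∀ i, x A i = 0 := by
  intro i
  have h0 : ∑ j, x A j = 0 := by rw [hx.row A, hA]
  exact (Finset.sum_eq_zero_iff_of_nonneg (fun j _ => hx.nonneg A j)).1 h0 i (Finset.mem_univ i)

theorem gale_split {S : Finset σ} {a : Finset σ → ℝ} {m : σ → ℝ}
    (hD : GaleData S a m) {I : Finset σ} (hIne : I.Nonempty) (hIS : I ⊂ S)
    (htight : cutSum a I = ∑ i ∈ I, m i)
    (IH : ∀ (S' : Finset σ) (a' : Finset σ → ℝ) (m' : σ → ℝ), S'.card < S.card →
      GaleData S' a' m' → ∃ x, GaleSol S' a' m' x) :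
    ∃ x, GaleSol S a m x := by
  have hISsub : I ⊆ S := hIS.subset
  set a₁ : Finset σ → ℝ := fun A => if A ⊆ I then a A else 0 with ha₁def
  set a₂ : Finset σ → ℝ :=
    fun B => ∑ A ∈ Finset.univ.filter (fun A : Finset σ => A \ I = B ∧ ¬ A ⊆ I), a A
    with ha₂def
  -- the key identity for cut sums of the second subproblem
  have cut2_eq : ∀ I' : Finset σ, cutSum a₂ I' = cutSum a (I ∪ I') - cutSum a I := by
    intro I'
    have h1 : cutSum a₂ I'
        = ∑ A ∈ Finset.univ.filter (fun A : Finset σ => ¬ A ⊆ I ∧ A \ I ⊆ I'), a A := by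
      rw [cutSum]
      rw [← Finset.sum_fiberwise_of_maps_to
        (g := fun A : Finset σ => A \ I)
        (s := Finset.univ.filter (fun A : Finset σ => ¬ A ⊆ I ∧ A \ I ⊆ I'))
        (t := Finset.univ.filter (fun B : Finset σ => B ⊆ I'))
        (by intro A hA
            simp only [Finset.mem_filter, Finset.mem_univ, true_and] at hA ⊢
            exact hA.2) a]
      apply Finset.sum_congr rfl
      intro B hB
      simp only [Finset.mem_filter, Finset.mem_univ, true_and] at hB
      apply Finset.sum_congr _ (fun _ _ => rfl)
      ext A
      simp only [Finset.mem_filter, Finset.mem_univ, true_and]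
      constructor
      · rintro ⟨hAB, hAI⟩
        exact ⟨⟨hAI, hAB ▸ hB⟩, hAB⟩
      · rintro ⟨⟨hAI, _⟩, hAB⟩
        exact ⟨hAB, hAI⟩
    have h2 : cutSum a (I ∪ I') = cutSum a I
        + ∑ A ∈ Finset.univ.filter (fun A : Finset σ => ¬ A ⊆ I ∧ A \ I ⊆ I'), a A := by
      rw [cutSum, ← Finset.sum_filter_add_sum_filter_not
        (Finset.univ.filter (fun A : Finset σ => A ⊆ I ∪ I')) (fun A => A ⊆ I)]
      congr 1
      · apply Finset.sum_congr _ (fun _ _ => rfl)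
        ext A
        simp only [Finset.mem_filter, Finset.mem_univ, true_and]
        constructor
        · rintro ⟨_, h⟩; exact h
        · intro h; exact ⟨h.trans Finset.subset_union_left, h⟩
      · apply Finset.sum_congr _ (fun _ _ => rfl)
        ext A
        simp only [Finset.mem_filter, Finset.mem_univ, true_and]
        constructor
        · rintro ⟨h1, h2⟩; exact ⟨h2, sdiff_subset_iff'.2 h1⟩
        · rintro ⟨h1, h2⟩; exact ⟨sdiff_subset_iff'.1 h2, h1⟩
    rw [h1, h2]; ring
  -- data for the first subproblem
  have hD₁ : GaleData I a₁ m := by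
    constructor
    · intro A; by_cases h : A ⊆ I <;> simp [ha₁def, h, hD.ha A]
    · intro A hA
      by_cases h : A ⊆ I
      · simp only [ha₁def, if_pos h] at hA
        exact ⟨(hD.hsupp A hA).1, h⟩
      · simp [ha₁def, h] at hA
    · exact hD.hm
    · intro I' hI'
      have : cutSum a₁ I' = cutSum a I' := by
        apply Finset.sum_congr rfl
        intro A hA
        simp only [Finset.mem_filter, Finset.mem_univ, true_and] at hA
        simp [ha₁def, hA.trans hI']
      rw [this]
      exact hD.hcut I' (hI'.trans hISsub)
    · have : cutSum a₁ I = cutSum a I := by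
        apply Finset.sum_congr rfl
        intro A hA
        simp only [Finset.mem_filter, Finset.mem_univ, true_and] at hA
        simp [ha₁def, hA]
      rw [this, htight]
  -- data for the second subproblem
  have hD₂ : GaleData (S \ I) a₂ m := by
    constructor
    · intro B; exact Finset.sum_nonneg fun A _ => hD.ha A
    · intro B hB
      obtain ⟨A, hAmem, hAne⟩ := Finset.exists_ne_zero_of_sum_ne_zero hB
      simp only [Finset.mem_filter, Finset.mem_univ, true_and] at hAmem
      obtain ⟨hAB, hAI⟩ := hAmem
      obtain ⟨-, hAS⟩ := hD.hsupp A hAne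
      constructor
      · rw [← hAB]
        rw [Finset.nonempty_iff_ne_empty]
        intro h
        exact hAI (Finset.sdiff_eq_empty_iff_subset.1 h)
      · rw [← hAB]
        exact Finset.sdiff_subset_sdiff hAS le_rfl
    · exact hD.hm
    · intro I' hI'
      rw [cut2_eq I', htight]
      have hdisj : Disjoint I I' := by
        refine Finset.disjoint_left.2 fun x hxI hxI' => ?_
        exact (Finset.mem_sdiff.1 (hI' hxI')).2 hxI
      have hsub : I ∪ I' ⊆ S :=
        Finset.union_subset hISsub (hI'.trans (Finset.sdiff_subset))
      have := hD.hcut (I ∪ I') hsub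
      rw [Finset.sum_union hdisj] at this
      linarith
    · rw [cut2_eq (S \ I), Finset.union_sdiff_of_subset hISsub, htight]
      have : ∑ i ∈ I, m i + ∑ i ∈ S \ I, m i = ∑ i ∈ S, m i := by
        rw [← Finset.sum_union (Finset.disjoint_sdiff), Finset.union_sdiff_of_subset hISsub]
      have h2 := hD.htot
      linarith
  -- solve the subproblems
  obtain ⟨x₁, hx₁⟩ := IH I a₁ m (Finset.card_lt_card hIS) hD₁
  obtain ⟨x₂, hx₂⟩ := IH (S \ I) a₂ m
    (by
      rw [Finset.card_sdiff_of_subset hISsub]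
      have h1 : 0 < I.card := Finset.card_pos.2 hIne
      have h2 : I.card ≤ S.card := Finset.card_le_card hISsub
      omega) hD₂
  -- auxiliary vanishing facts
  have hx₁zero : ∀ A : Finset σ, ¬ A ⊆ I → ∀ i, x₁ A i = 0 := by
    intro A hA i
    exact hx₁.row_zero (by simp [ha₁def, hA]) i
  have hx₁out : ∀ (A : Finset σ) (i : σ), i ∉ I → x₁ A i = 0 := by
    intro A i hi
    by_cases hA : A ⊆ I
    · exact hx₁.supp A i fun hiA => hi (hA hiA)
    · exact hx₁zero A hA i
  have hx₂out : ∀ (B : Finset σ) (i : σ), i ∉ S \ I → x₂ B i = 0 := by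
    intro B i hi
    by_cases hB : a₂ B = 0
    · exact hx₂.row_zero hB i
    · exact hx₂.supp B i fun hiB => hi ((hD₂.hsupp B hB).2 hiB)
  -- combine
  refine ⟨fun A i => if A ⊆ I then x₁ A i else
    (if a₂ (A \ I) = 0 then 0 else a A * x₂ (A \ I) i / a₂ (A \ I)), ?_, ?_, ?_, ?_⟩
  · intro A i
    by_cases h : A ⊆ I
    · simpa [h] using hx₁.nonneg A i
    · simp only [if_neg h]
      by_cases h2 : a₂ (A \ I) = 0
      · simp [h2]
      · have hpos : 0 < a₂ (A \ I) := lt_of_le_of_ne (hD₂.ha _) (Ne.symm h2)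
        simp only [if_neg h2]
        exact div_nonneg (mul_nonneg (hD.ha A) (hx₂.nonneg _ i)) hpos.le
  · intro A i hi
    by_cases h : A ⊆ I
    · simpa [h] using hx₁.supp A i hi
    · simp only [if_neg h]
      by_cases h2 : a₂ (A \ I) = 0
      · simp [h2]
      · have : x₂ (A \ I) i = 0 :=
          hx₂.supp _ i fun hmem => hi (Finset.mem_sdiff.1 hmem).1
        simp [h2, this]
  · intro A
    by_cases h : A ⊆ I
    · simp only [if_pos h]
      have := hx₁.row A
      simp only [ha₁def, if_pos h] at this
      exact this
    · simp only [if_neg h]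
      by_cases h2 : a₂ (A \ I) = 0
      · simp only [if_pos h2, Finset.sum_const_zero]
        have hterm : A ∈ Finset.univ.filter (fun A' : Finset σ => A' \ I = A \ I ∧ ¬ A' ⊆ I) :=
          by simp [h]
        have := (Finset.sum_eq_zero_iff_of_nonneg
          (fun A' _ => hD.ha A')).1 h2 A hterm
        rw [this]
      · simp only [if_neg h2]
        rw [← Finset.sum_div, ← Finset.mul_sum, hx₂.row (A \ I), mul_div_assoc,
          div_self h2, mul_one]
  · intro i hi
    rw [← Finset.sum_filter_add_sum_filter_not Finset.univ (fun A : Finset σ => A ⊆ I)]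
    have e1 : ∑ A ∈ Finset.univ.filter (fun A : Finset σ => A ⊆ I),
        (if A ⊆ I then x₁ A i else
          (if a₂ (A \ I) = 0 then 0 else a A * x₂ (A \ I) i / a₂ (A \ I)))
        = ∑ A ∈ Finset.univ.filter (fun A : Finset σ => A ⊆ I), x₁ A i := by
      apply Finset.sum_congr rfl
      intro A hA
      simp only [Finset.mem_filter, Finset.mem_univ, true_and] at hA
      rw [if_pos hA]
    have e2 : ∑ A ∈ Finset.univ.filter (fun A : Finset σ => ¬ A ⊆ I),
        (if A ⊆ I then x₁ A i else
          (if a₂ (A \ I) = 0 then 0 else a A * x₂ (A \ I) i / a₂ (A \ I)))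
        = ∑ A ∈ Finset.univ.filter (fun A : Finset σ => ¬ A ⊆ I),
          (if a₂ (A \ I) = 0 then 0 else a A * x₂ (A \ I) i / a₂ (A \ I)) := by
      apply Finset.sum_congr rfl
      intro A hA
      simp only [Finset.mem_filter, Finset.mem_univ, true_and] at hA
      rw [if_neg hA]
    rw [e1, e2]
    by_cases hiI : i ∈ I
    · have hs2 : ∑ A ∈ Finset.univ.filter (fun A : Finset σ => ¬ A ⊆ I),
          (if a₂ (A \ I) = 0 then 0 else a A * x₂ (A \ I) i / a₂ (A \ I)) = 0 := by
        apply Finset.sum_eq_zero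
        intro A hA
        by_cases h2 : a₂ (A \ I) = 0
        · simp [h2]
        · have : x₂ (A \ I) i = 0 := hx₂out _ i (by simp [hiI])
          simp [h2, this]
      have hs1 : ∑ A ∈ Finset.univ.filter (fun A : Finset σ => A ⊆ I), x₁ A i
          = ∑ A : Finset σ, x₁ A i := by
        apply Finset.sum_subset (Finset.filter_subset _ _)
        intro A _ hA
        simp only [Finset.mem_filter, Finset.mem_univ, true_and] at hA
        exact hx₁zero A hA i
      rw [hs1, hs2, hx₁.col i hiI, add_zero]
    · have hs1 : ∑ A ∈ Finset.univ.filter (fun A : Finset σ => A ⊆ I), x₁ A i = 0 :=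
        Finset.sum_eq_zero fun A _ => hx₁out A i hiI
      have hiSI : i ∈ S \ I := Finset.mem_sdiff.2 ⟨hi, hiI⟩
      have hs2 : ∑ A ∈ Finset.univ.filter (fun A : Finset σ => ¬ A ⊆ I),
          (if a₂ (A \ I) = 0 then 0 else a A * x₂ (A \ I) i / a₂ (A \ I))
          = ∑ B : Finset σ, x₂ B i := by
        rw [← Finset.sum_fiberwise_of_maps_to
          (g := fun A : Finset σ => A \ I)
          (s := Finset.univ.filter (fun A : Finset σ => ¬ A ⊆ I))
          (t := (Finset.univ : Finset (Finset σ)))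
          (fun _ _ => Finset.mem_univ _)]
        apply Finset.sum_congr rfl
        intro B _
        by_cases h2 : a₂ B = 0
        · have hx₂B : x₂ B i = 0 := hx₂.row_zero h2 i
          rw [hx₂B]
          apply Finset.sum_eq_zero
          intro A hA
          simp only [Finset.mem_filter, Finset.mem_univ, true_and] at hA
          rw [hA.2, if_pos h2]
        · have hfiber : (Finset.univ.filter (fun A : Finset σ => ¬ A ⊆ I)).filter
              (fun A => A \ I = B)
              = Finset.univ.filter (fun A : Finset σ => A \ I = B ∧ ¬ A ⊆ I) := by
            ext A
            simp only [Finset.mem_filter, Finset.mem_univ, true_and]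
            tauto
          have : ∑ A ∈ (Finset.univ.filter (fun A : Finset σ => ¬ A ⊆ I)).filter
              (fun A => A \ I = B),
              (if a₂ (A \ I) = 0 then 0 else a A * x₂ (A \ I) i / a₂ (A \ I))
              = ∑ A ∈ Finset.univ.filter (fun A : Finset σ => A \ I = B ∧ ¬ A ⊆ I),
                a A * x₂ B i / a₂ B := by
            rw [hfiber]
            apply Finset.sum_congr rfl
            intro A hA
            simp only [Finset.mem_filter, Finset.mem_univ, true_and] at hA
            rw [hA.1, if_neg h2]
          rw [this, ← Finset.sum_div, ← Finset.sum_mul]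
          have ha₂B : ∑ A ∈ Finset.univ.filter
              (fun A : Finset σ => A \ I = B ∧ ¬ A ⊆ I), a A = a₂ B := rfl
          rw [ha₂B, mul_comm, mul_div_assoc, div_self h2, mul_one]
      rw [hs1, hs2, hx₂.col i hiSI, zero_add]


theorem gale_main : ∀ (n k : ℕ) (S : Finset σ) (a : Finset σ → ℝ) (m : σ → ℝ),
    S.card ≤ n → liveCount S a m ≤ k → GaleData S a m → ∃ x, GaleSol S a m x := by
  intro n
  induction n with
  | zero =>
    intro k S a m hcard _ hD
    have hS : S = ∅ := Finset.card_eq_zero.1 (Nat.le_zero.1 hcard)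
    have hz : ∀ A, a A = 0 := by
      intro A
      by_contra hA
      obtain ⟨hne, hsub⟩ := hD.hsupp A hA
      rw [hS, Finset.subset_empty] at hsub
      exact hne.ne_empty hsub
    exact ⟨_, gale_zero hD hz⟩
  | succ n ihn =>
    intro k
    induction k with
    | zero =>
      intro S a m hcard hlive hD
      have hz : ∀ A, a A = 0 := by
        intro A
        by_contra hA
        have hmem : A ∈ Finset.univ.filter (fun A : Finset σ => a A ≠ 0) := by
          simp [hA]
        have hpos : 0 < (Finset.univ.filter (fun A : Finset σ => a A ≠ 0)).card :=
          Finset.card_pos.2 ⟨A, hmem⟩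
        unfold liveCount at hlive
        omega
      exact ⟨_, gale_zero hD hz⟩
    | succ k ihk =>
      intro S a m hcard hlive hD
      have IH : ∀ (S' : Finset σ) (a' : Finset σ → ℝ) (m' : σ → ℝ), S'.card < S.card →
          GaleData S' a' m' → ∃ x, GaleSol S' a' m' x := by
        intro S' a' m' hlt hD'
        exact ihn (liveCount S' a' m') S' a' m' (by omega) le_rfl hD'
      by_cases htight : ∃ I : Finset σ, I.Nonempty ∧ I ⊂ S ∧ cutSum a I = ∑ i ∈ I, m i
      · obtain ⟨I, h1, h2, h3⟩ := htight
        exact gale_split hD h1 h2 h3 IH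
      · by_cases hz : ∀ A, a A = 0
        · exact ⟨_, gale_zero hD hz⟩
        · push_neg at hz
          obtain ⟨A₀, hA₀⟩ := hz
          obtain ⟨hA₀ne, hA₀S⟩ := hD.hsupp A₀ hA₀
          have hA₀pos : 0 < a A₀ := lt_of_le_of_ne (hD.ha A₀) (Ne.symm hA₀)
          have hex : ∃ i ∈ A₀, m i ≠ 0 := by
            by_contra hno
            push_neg at hno
            have h1 : a A₀ ≤ cutSum a A₀ := by
              apply Finset.single_le_sum (f := a) (fun A _ => hD.ha A)
              simp
            have h2 := hD.hcut A₀ hA₀S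
            have h3 : ∑ i ∈ A₀, m i = 0 := Finset.sum_eq_zero hno
            linarith
          obtain ⟨i₀, hi₀A, hmi₀⟩ := hex
          have hi₀S : i₀ ∈ S := hA₀S hi₀A
          have hmi₀pos : 0 < m i₀ := lt_of_le_of_ne (hD.hm i₀) (Ne.symm hmi₀)
          set slack : Finset σ → ℝ := fun I => ∑ i ∈ I, m i - cutSum a I with hslackdef
          set C : Finset (Finset σ) := S.powerset.filter (fun I => i₀ ∈ I ∧ ¬ A₀ ⊆ I)
            with hCdef
          have hCmem : ∀ I ∈ C, I ⊆ S ∧ i₀ ∈ I ∧ ¬ A₀ ⊆ I := by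
            intro I hI
            simp only [hCdef, Finset.mem_filter, Finset.mem_powerset] at hI
            exact ⟨hI.1, hI.2.1, hI.2.2⟩
          have hCslack : ∀ I ∈ C, 0 < slack I := by
            intro I hI
            obtain ⟨hIS', hi₀I, hnA⟩ := hCmem I hI
            have hle := hD.hcut I hIS'
            have hne2 : cutSum a I ≠ ∑ i ∈ I, m i := by
              intro heq
              apply htight
              refine ⟨I, ⟨i₀, hi₀I⟩, ?_, heq⟩
              refine Finset.ssubset_iff_subset_ne.2 ⟨hIS', ?_⟩
              rintro rfl
              exact hnA hA₀S
            have : cutSum a I < ∑ i ∈ I, m i := lt_of_le_of_ne hle hne2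
            simp only [hslackdef]
            linarith
          have hd : ∃ d : ℝ, 0 < d ∧ (∀ I ∈ C, d ≤ slack I) ∧
              (d = a A₀ ∨ ∃ I ∈ C, d = slack I) := by
            by_cases hC : C.Nonempty
            · refine ⟨C.inf' hC slack, ?_, ?_, ?_⟩
              · obtain ⟨I, hI, hIeq⟩ := Finset.exists_mem_eq_inf' hC slack
                rw [hIeq]
                exact hCslack I hI
              · intro I hI
                exact Finset.inf'_le slack hI
              · obtain ⟨I, hI, hIeq⟩ := Finset.exists_mem_eq_inf' hC slack
                exact Or.inr ⟨I, hI, hIeq⟩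
            · refine ⟨a A₀, hA₀pos, ?_, Or.inl rfl⟩
              intro I hI
              exact absurd ⟨I, hI⟩ hC
          obtain ⟨d, hdpos, hdle, hdeq⟩ := hd
          set ε : ℝ := min (a A₀) (min (m i₀) d) with hεdef
          have hεpos : 0 < ε := lt_min hA₀pos (lt_min hmi₀pos hdpos)
          have hεa : ε ≤ a A₀ := min_le_left _ _
          have hεm : ε ≤ m i₀ := (min_le_right _ _).trans (min_le_left _ _)
          have hεd : ∀ I ∈ C, ε ≤ slack I := fun I hI =>
            ((min_le_right _ _).trans (min_le_right _ _)).trans (hdle I hI)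
          set a' : Finset σ → ℝ := Function.update a A₀ (a A₀ - ε) with ha'def
          set m' : σ → ℝ := Function.update m i₀ (m i₀ - ε) with hm'def
          have hcutsum' : ∀ I : Finset σ,
              cutSum a' I = cutSum a I - (if A₀ ⊆ I then ε else 0) := by
            intro I
            by_cases hAI : A₀ ⊆ I
            · have hmem : A₀ ∈ Finset.univ.filter (fun A : Finset σ => A ⊆ I) := by
                simp [hAI]
              rw [if_pos hAI, cutSum, cutSum, Finset.sum_update_of_mem hmem,
               ← Finset.add_sum_erase _ a hmem, Finset.erase_eq]
              ring
            · have hmem : A₀ ∉ Finset.univ.filter (fun A : Finset σ => A ⊆ I) := by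
                simp [hAI]
              rw [if_neg hAI, cutSum, cutSum, Finset.sum_update_of_notMem hmem, sub_zero]
          have hmsum' : ∀ I : Finset σ,
              ∑ i ∈ I, m' i = ∑ i ∈ I, m i - (if i₀ ∈ I then ε else 0) := by
            intro I
            by_cases hiI : i₀ ∈ I
            · rw [if_pos hiI, hm'def, Finset.sum_update_of_mem hiI,
               ← Finset.add_sum_erase _ m hiI, Finset.erase_eq]
              ring
            · rw [if_neg hiI, hm'def, Finset.sum_update_of_notMem hiI, sub_zero]
          have hD' : GaleData S a' m' := by
            constructor
            · intro A
              by_cases hA : A = A₀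
              · subst hA; rw [ha'def, Function.update_self]; linarith
              · rw [ha'def, Function.update_of_ne hA]; exact hD.ha A
            · intro A hA
              by_cases h : A = A₀
              · subst h; exact ⟨hA₀ne, hA₀S⟩
              · rw [ha'def, Function.update_of_ne h] at hA
                exact hD.hsupp A hA
            · intro i
              by_cases hi : i = i₀
              · subst hi; rw [hm'def, Function.update_self]; linarith
              · rw [hm'def, Function.update_of_ne hi]; exact hD.hm i
            · intro I hIsub
              rw [hcutsum' I, hmsum' I]
              by_cases hAI : A₀ ⊆ I
              · rw [if_pos hAI, if_pos (hAI hi₀A)]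
                have := hD.hcut I hIsub
                linarith
              · rw [if_neg hAI]
                by_cases hiI : i₀ ∈ I
                · rw [if_pos hiI]
                  have hIC : I ∈ C := by
                    simp only [hCdef, Finset.mem_filter, Finset.mem_powerset]
                    exact ⟨hIsub, hiI, hAI⟩
                  have := hεd I hIC
                  simp only [hslackdef] at this
                  linarith
                · rw [if_neg hiI]
                  have := hD.hcut I hIsub
                  linarith
            · rw [hcutsum' S, hmsum' S, if_pos hA₀S, if_pos hi₀S]
              have := hD.htot
              linarith
          have hsol' : ∃ x, GaleSol S a' m' x := by
            rcases min_cases (a A₀) (min (m i₀) d) with ⟨hc1, -⟩ | ⟨hc1, hc1'⟩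
            · -- ε = a A₀ : class A₀ dies
              have ha'A₀ : a' A₀ = 0 := by
                rw [ha'def, Function.update_self, hεdef, hc1]; ring
              have hsub1 : Finset.univ.filter (fun A : Finset σ => a' A ≠ 0) ⊆
                  (Finset.univ.filter (fun A : Finset σ => a A ≠ 0)).erase A₀ := by
                intro A hA
                simp only [Finset.mem_filter, Finset.mem_univ, true_and] at hA
                have hAne : A ≠ A₀ := by
                  rintro rfl; exact hA ha'A₀
                rw [Finset.mem_erase]
                refine ⟨hAne, ?_⟩
                simp only [Finset.mem_filter, Finset.mem_univ, true_and]
                rw [ha'def, Function.update_of_ne hAne] at hA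
                exact hA
              have hsub2 : S.filter (fun i => m' i ≠ 0) ⊆ S.filter (fun i => m i ≠ 0) := by
                intro i hi
                simp only [Finset.mem_filter] at hi ⊢
                refine ⟨hi.1, ?_⟩
                by_cases h : i = i₀
                · subst h; exact hmi₀
                · rw [hm'def, Function.update_of_ne h] at hi
                  exact hi.2
              have hA₀mem : A₀ ∈ Finset.univ.filter (fun A : Finset σ => a A ≠ 0) := by
                simp [hA₀]
              have hlive' : liveCount S a' m' ≤ k := by
                have h1 := Finset.card_le_card hsub1
                have h2 := Finset.card_le_card hsub2
                have h3 := Finset.card_erase_of_mem hA₀mem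
                have h4 : 0 < (Finset.univ.filter (fun A : Finset σ => a A ≠ 0)).card :=
                  Finset.card_pos.2 ⟨A₀, hA₀mem⟩
                unfold liveCount at hlive ⊢
                omega
              exact ihk S a' m' hcard hlive' hD'
            · rcases min_cases (m i₀) d with ⟨hc2, -⟩ | ⟨hc2, hc2'⟩
              · -- ε = m i₀ : sink i₀ dies
                have hm'i₀ : m' i₀ = 0 := by
                  rw [hm'def, Function.update_self, hεdef, hc1, hc2]; ring
                have hsub1 : Finset.univ.filter (fun A : Finset σ => a' A ≠ 0) ⊆
                    Finset.univ.filter (fun A : Finset σ => a A ≠ 0) := by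
                  intro A hA
                  simp only [Finset.mem_filter, Finset.mem_univ, true_and] at hA ⊢
                  by_cases h : A = A₀
                  · subst h; exact hA₀
                  · rw [ha'def, Function.update_of_ne h] at hA
                    exact hA
                have hsub2 : S.filter (fun i => m' i ≠ 0) ⊆
                    (S.filter (fun i => m i ≠ 0)).erase i₀ := by
                  intro i hi
                  simp only [Finset.mem_filter] at hi
                  have hine : i ≠ i₀ := by
                    rintro rfl; exact hi.2 hm'i₀
                  rw [Finset.mem_erase]
                  refine ⟨hine, ?_⟩
                  simp only [Finset.mem_filter]
                  rw [hm'def, Function.update_of_ne hine] at hi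
                  exact hi
                have hi₀mem : i₀ ∈ S.filter (fun i => m i ≠ 0) := by
                  simp [hi₀S, hmi₀]
                have hlive' : liveCount S a' m' ≤ k := by
                  have h1 := Finset.card_le_card hsub1
                  have h2 := Finset.card_le_card hsub2
                  have h3 := Finset.card_erase_of_mem hi₀mem
                  have h4 : 0 < (S.filter (fun i => m i ≠ 0)).card :=
                    Finset.card_pos.2 ⟨i₀, hi₀mem⟩
                  unfold liveCount at hlive ⊢
                  omega
                exact ihk S a' m' hcard hlive' hD'
              · -- ε = d, and d is the slack of some I₀ ∈ C (or d = a A₀, subsumed above)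
                have hεeq : ε = d := by rw [hεdef, hc1, hc2]
                rcases hdeq with hda | ⟨I₀, hI₀C, hI₀eq⟩
                · -- d = a A₀ : then ε = a A₀, same as the first case; redo it
                  have ha'A₀ : a' A₀ = 0 := by
                    rw [ha'def, Function.update_self, hεeq, hda]; ring
                  have hsub1 : Finset.univ.filter (fun A : Finset σ => a' A ≠ 0) ⊆
                      (Finset.univ.filter (fun A : Finset σ => a A ≠ 0)).erase A₀ := by
                    intro A hA
                    simp only [Finset.mem_filter, Finset.mem_univ, true_and] at hA
                    have hAne : A ≠ A₀ := by
                      rintro rfl; exact hA ha'A₀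
                    rw [Finset.mem_erase]
                    refine ⟨hAne, ?_⟩
                    simp only [Finset.mem_filter, Finset.mem_univ, true_and]
                    rw [ha'def, Function.update_of_ne hAne] at hA
                    exact hA
                  have hsub2 : S.filter (fun i => m' i ≠ 0) ⊆ S.filter (fun i => m i ≠ 0) := by
                    intro i hi
                    simp only [Finset.mem_filter] at hi ⊢
                    refine ⟨hi.1, ?_⟩
                    by_cases h : i = i₀
                    · subst h; exact hmi₀
                    · rw [hm'def, Function.update_of_ne h] at hi
                      exact hi.2
                  have hA₀mem : A₀ ∈ Finset.univ.filter (fun A : Finset σ => a A ≠ 0) := by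
                    simp [hA₀]
                  have hlive' : liveCount S a' m' ≤ k := by
                    have h1 := Finset.card_le_card hsub1
                    have h2 := Finset.card_le_card hsub2
                    have h3 := Finset.card_erase_of_mem hA₀mem
                    have h4 : 0 < (Finset.univ.filter (fun A : Finset σ => a A ≠ 0)).card :=
                      Finset.card_pos.2 ⟨A₀, hA₀mem⟩
                    unfold liveCount at hlive ⊢
                    omega
                  exact ihk S a' m' hcard hlive' hD'
                · -- new tight set I₀ : split
                  obtain ⟨hI₀S, hi₀I₀, hnAI₀⟩ := hCmem I₀ hI₀C
                  have htight' : cutSum a' I₀ = ∑ i ∈ I₀, m' i := by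
                    rw [hcutsum' I₀, hmsum' I₀, if_neg hnAI₀, if_pos hi₀I₀, sub_zero]
                    have : ε = ∑ i ∈ I₀, m i - cutSum a I₀ := by
                      rw [hεeq, hI₀eq, hslackdef]
                    linarith
                  have hI₀ss : I₀ ⊂ S := by
                    refine Finset.ssubset_iff_subset_ne.2 ⟨hI₀S, ?_⟩
                    rintro rfl
                    exact hnAI₀ hA₀S
                  exact gale_split hD' ⟨i₀, hi₀I₀⟩ hI₀ss htight' IH
          obtain ⟨x, hx⟩ := hsol'
          exact ⟨_, gale_route hi₀A hx hi₀S hεpos.le⟩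


theorem gale (S : Finset σ) (a : Finset σ → ℝ) (m : σ → ℝ) (hD : GaleData S a m) :
    ∃ x, GaleSol S a m x :=
  gale_main S.card (liveCount S a m) S a m le_rfl le_rfl hD

end BathtubGale

end BathtubGaleSection

namespace Bathtub

/-! ### inf' helpers -/

lemma inf'_add_const {ι : Type*} (s : Finset ι) (hs : s.Nonempty) (f : ι → ℝ) (c : ℝ) :
    s.inf' hs (fun i => f i + c) = s.inf' hs f + c := by
  apply le_antisymm
  · obtain ⟨i, hi, hieq⟩ := Finset.exists_mem_eq_inf' hs f
    calc s.inf' hs (fun i => f i + c) ≤ f i + c := Finset.inf'_le _ hi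
    _ = s.inf' hs f + c := by rw [hieq]
  · obtain ⟨i, hi, hieq⟩ := Finset.exists_mem_eq_inf' hs (fun i => f i + c)
    calc s.inf' hs f + c ≤ f i + c := by
          have : s.inf' hs f ≤ f i := Finset.inf'_le _ hi
          linarith
    _ = s.inf' hs (fun i => f i + c) := by rw [hieq]

lemma le_inf'_add {ι : Type*} (s : Finset ι) (hs : s.Nonempty) (f g : ι → ℝ) (c : ℝ)
    (h : ∀ i ∈ s, f i ≤ g i + c) : s.inf' hs f ≤ s.inf' hs g + c := by
  obtain ⟨i, hi, hieq⟩ := Finset.exists_mem_eq_inf' hs g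
  calc s.inf' hs f ≤ f i := Finset.inf'_le _ hi
  _ ≤ g i + c := h i hi
  _ = s.inf' hs g + c := by rw [hieq]

lemma measurable_inf' {X ι : Type*} [MeasurableSpace X] {s : Finset ι} (hs : s.Nonempty)
    (f : ι → X → ℝ) (hf : ∀ i, Measurable (f i)) :
    Measurable (fun x => s.inf' hs (fun i => f i x)) := by
  induction hs using Finset.Nonempty.cons_induction with
  | singleton a => simpa using hf a
  | cons a s ha hs ih =>
    have heq : (fun x => (Finset.cons a s ha).inf' (Finset.cons_nonempty ha)
        (fun i => f i x)) = fun x => f a x ⊓ s.inf' hs (fun i => f i x) := by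
      funext x
      exact Finset.inf'_cons (H := hs) (f := fun i => f i x) (b := a) (hb := ha)
    rw [heq]
    exact Measurable.inf (hf a) ih



section Dual

variable {X : Type*} [MeasurableSpace X] {N : ℕ}

/-- The pointwise minimum `min_i (F i x + α i)`. -/
noncomputable def dmin (F : Fin (N + 1) → X → ℝ) (α : Fin (N + 1) → ℝ) (x : X) : ℝ :=
  Finset.univ.inf' Finset.univ_nonempty (fun i => F i x + α i)

lemma dmin_le (F : Fin (N + 1) → X → ℝ) (α : Fin (N + 1) → ℝ) (x : X) (i : Fin (N + 1)) :
    dmin F α x ≤ F i x + α i :=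
  Finset.inf'_le _ (Finset.mem_univ i)

lemma le_dmin {F : Fin (N + 1) → X → ℝ} {α : Fin (N + 1) → ℝ} {x : X} {c : ℝ}
    (h : ∀ i, c ≤ F i x + α i) : c ≤ dmin F α x :=
  Finset.le_inf' _ _ (fun i _ => h i)

lemma dmin_exists (F : Fin (N + 1) → X → ℝ) (α : Fin (N + 1) → ℝ) (x : X) :
    ∃ i, dmin F α x = F i x + α i := by
  obtain ⟨i, _, h⟩ := Finset.exists_mem_eq_inf' (Finset.univ_nonempty)
    (fun i => F i x + α i)
  exact ⟨i, h⟩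

lemma measurable_dmin {F : Fin (N + 1) → X → ℝ} (hF : ∀ i, Measurable (F i))
    (α : Fin (N + 1) → ℝ) : Measurable (dmin F α) :=
  measurable_inf' _ _ (fun i => (hF i).add_const (α i))

lemma abs_dmin_le {F : Fin (N + 1) → X → ℝ} {C : ℝ} (hFb : ∀ i x, |F i x| ≤ C)
    (α : Fin (N + 1) → ℝ) (x : X) :
    |dmin F α x| ≤ C + Finset.univ.sup' Finset.univ_nonempty (fun i => |α i|) := by
  set M := Finset.univ.sup' Finset.univ_nonempty (fun i => |α i|) with hM
  rw [abs_le]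
  constructor
  · refine le_dmin fun i => ?_
    have h1 := abs_le.1 (hFb i x)
    have h2 : |α i| ≤ M := Finset.le_sup' (fun j => |α j|) (Finset.mem_univ i)
    have h4 : -(|α i|) ≤ α i := neg_abs_le _
    linarith
  · obtain ⟨i, hi⟩ := dmin_exists F α x
    rw [hi]
    have h1 := abs_le.1 (hFb i x)
    have h2 : |α i| ≤ M := Finset.le_sup' (fun j => |α j|) (Finset.mem_univ i)
    have h4 : α i ≤ |α i| := le_abs_self _
    linarith

lemma integrable_dmin {μ : Measure X} [IsFiniteMeasure μ] {F : Fin (N + 1) → X → ℝ}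
    (hF : ∀ i, Measurable (F i)) {C : ℝ} (hFb : ∀ i x, |F i x| ≤ C)
    (α : Fin (N + 1) → ℝ) : Integrable (dmin F α) μ := by
  refine ⟨(measurable_dmin hF α).aestronglyMeasurable, ?_⟩
  exact HasFiniteIntegral.of_bounded
    (C := C + Finset.univ.sup' Finset.univ_nonempty (fun i => |α i|))
    (Filter.Eventually.of_forall fun x => by
      simpa [Real.norm_eq_abs] using abs_dmin_le hFb α x)

/-- The dual functional. -/
noncomputable def dualVal (μ : Measure X) (F : Fin (N + 1) → X → ℝ)
    (m : Fin (N + 1) → ℝ) (α : Fin (N + 1) → ℝ) : ℝ :=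
  (∫ x, dmin F α x ∂μ) - ∑ i, α i * m i

/-- Existence of a dual maximizer. -/
lemma exists_dual_max (μ : Measure X) [IsFiniteMeasure μ] {F : Fin (N + 1) → X → ℝ}
    (hF : ∀ i, Measurable (F i)) {C : ℝ} (hC : 0 ≤ C) (hFb : ∀ i x, |F i x| ≤ C)
    {m : Fin (N + 1) → ℝ} (hm : ∀ i, 0 < m i) (hT : ∑ i, m i = (μ Set.univ).toReal) :
    ∃ α, ∀ β, dualVal μ F m β ≤ dualVal μ F m α := by
  classical
  set T : ℝ := (μ Set.univ).toReal with hTdef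
  have hT0 : 0 ≤ T := ENNReal.toReal_nonneg
  -- continuity of the dual functional
  have hcont : Continuous (dualVal μ F m) := by
    have h1 : LipschitzWith T.toNNReal (fun α : Fin (N + 1) → ℝ => ∫ x, dmin F α x ∂μ) := by
      apply LipschitzWith.of_dist_le_mul
      intro α β
      have key : ∀ x, |dmin F α x - dmin F β x| ≤ dist α β := by
        intro x
        have hba : dmin F β x ≤ dmin F α x + dist α β := by
          apply le_inf'_add Finset.univ Finset.univ_nonempty
            (fun i => F i x + β i) (fun i => F i x + α i) (dist α β)
          intro i _
          have h1 : dist (β i) (α i) ≤ dist β α := dist_le_pi_dist β α i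
          rw [Real.dist_eq] at h1
          have h2 := (abs_le.1 h1).2
          rw [dist_comm α β]
          linarith
        have hab : dmin F α x ≤ dmin F β x + dist α β := by
          apply le_inf'_add Finset.univ Finset.univ_nonempty
            (fun i => F i x + α i) (fun i => F i x + β i) (dist α β)
          intro i _
          have h1 : dist (α i) (β i) ≤ dist α β := dist_le_pi_dist α β i
          rw [Real.dist_eq] at h1
          have h2 := (abs_le.1 h1).2
          linarith
        rw [abs_le]
        constructor <;> [linarith; linarith]
      have hint : ∀ γ : Fin (N + 1) → ℝ, Integrable (dmin F γ) μ :=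
        fun γ => integrable_dmin hF hFb γ
      rw [Real.dist_eq, ← integral_sub (hint α) (hint β)]
      calc |∫ x, (dmin F α x - dmin F β x) ∂μ|
          ≤ ∫ x, |dmin F α x - dmin F β x| ∂μ := by
            simpa [Real.norm_eq_abs] using
              norm_integral_le_integral_norm (fun x => dmin F α x - dmin F β x) (μ := μ)
        _ ≤ ∫ _x, dist α β ∂μ := by
            apply integral_mono ((hint α).sub (hint β)).abs (integrable_const _)
            intro x
            exact key x
        _ = T * dist α β := by
            rw [integral_const, smul_eq_mul, measureReal_def, hTdef]
        _ = ↑T.toNNReal * dist α β := by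
            rw [Real.coe_toNNReal T hT0]
    exact (h1.continuous).sub
      (continuous_finset_sum _ fun i _ => (continuous_apply i).mul continuous_const)
  -- minimum of the masses
  set mmin : ℝ := Finset.univ.inf' Finset.univ_nonempty m with hmmin
  have hmminpos : 0 < mmin := by
    obtain ⟨i, _, h⟩ := Finset.exists_mem_eq_inf' (Finset.univ_nonempty) m
    rw [hmmin, h]; exact hm i
  set R : ℝ := 2 * C * T / mmin + 1 with hRdef
  have hR0 : 0 ≤ R := by positivity
  set K : Set (Fin (N + 1) → ℝ) := Set.Icc 0 (fun _ => R) with hKdef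
  have hKcomp : IsCompact K := isCompact_Icc
  have h0K : (0 : Fin (N + 1) → ℝ) ∈ K := by
    refine Set.mem_Icc.2 ⟨le_refl _, ?_⟩
    intro i; exact hR0
  obtain ⟨α, hαK, hαmax⟩ := hKcomp.exists_isMaxOn ⟨0, h0K⟩ hcont.continuousOn
  refine ⟨α, fun β => ?_⟩
  -- normalize β
  set c : ℝ := Finset.univ.inf' Finset.univ_nonempty β with hcdef
  set β' : Fin (N + 1) → ℝ := fun i => β i - c with hβ'def
  have hβ'0 : ∀ i, 0 ≤ β' i := fun i => sub_nonneg.2 (Finset.inf'_le _ (Finset.mem_univ i))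
  have hdminβ' : ∀ x, dmin F β' x = dmin F β x - c := by
    intro x
    have : (fun i => F i x + β' i) = fun i => (F i x + β i) + (-c) := by
      funext i; simp [hβ'def]; ring
    rw [dmin, this, inf'_add_const]
    rfl
  have hJβ' : dualVal μ F m β' = dualVal μ F m β := by
    rw [dualVal, dualVal]
    have h1 : ∫ x, dmin F β' x ∂μ = (∫ x, dmin F β x ∂μ) - c * T := by
      have : (fun x => dmin F β' x) = fun x => dmin F β x - c := funext hdminβ'
      rw [this, integral_sub (integrable_dmin hF hFb β) (integrable_const c),
        integral_const, smul_eq_mul, measureReal_def, hTdef]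
      ring
    have h2 : ∑ i, β' i * m i = (∑ i, β i * m i) - c * T := by
      have : ∀ i ∈ Finset.univ, β' i * m i = β i * m i - c * m i := by
        intro i _; simp [hβ'def]; ring
      rw [Finset.sum_congr rfl this, Finset.sum_sub_distrib, ← Finset.mul_sum, hT]
    rw [h1, h2]; ring
  rw [← hJβ']
  by_cases hK : β' ∈ K
  · exact hαmax hK
  · -- β' has a large coordinate; compare with 0 ∈ K
    have h0le : dualVal μ F m β' ≤ dualVal μ F m 0 := by
      obtain ⟨i₁, hi₁⟩ : ∃ i, R < β' i := by
        by_contra hno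
        push_neg at hno
        exact hK (Set.mem_Icc.2 ⟨fun i => hβ'0 i, fun i => hno i⟩)
      -- index attaining the inf of β
      obtain ⟨j₀, _, hj₀⟩ := Finset.exists_mem_eq_inf' (Finset.univ_nonempty) β
      have hβ'j₀ : β' j₀ = 0 := by simp [hβ'def, hcdef, hj₀]
      -- upper bound for dualVal β'
      have hub : dualVal μ F m β' ≤ C * T - R * mmin := by
        rw [dualVal]
        have h1 : ∫ x, dmin F β' x ∂μ ≤ C * T := by
          calc ∫ x, dmin F β' x ∂μ ≤ ∫ _x, C ∂μ := by
                apply integral_mono (integrable_dmin hF hFb β') (integrable_const C)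
                intro x
                calc dmin F β' x ≤ F j₀ x + β' j₀ := dmin_le F β' x j₀
                _ = F j₀ x := by rw [hβ'j₀, add_zero]
                _ ≤ C := (abs_le.1 (hFb j₀ x)).2
          _ = C * T := by rw [integral_const, smul_eq_mul, measureReal_def, hTdef, mul_comm]
        have h2 : R * mmin ≤ ∑ i, β' i * m i := by
          have hterm : R * mmin ≤ β' i₁ * m i₁ := by
            apply mul_le_mul hi₁.le _ hmminpos.le (le_of_lt (lt_of_le_of_lt hR0 hi₁))
            exact Finset.inf'_le _ (Finset.mem_univ i₁)
          calc R * mmin ≤ β' i₁ * m i₁ := hterm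
          _ ≤ ∑ i, β' i * m i := by
              apply Finset.single_le_sum (f := fun i => β' i * m i)
                (fun i _ => mul_nonneg (hβ'0 i) (hm i).le) (Finset.mem_univ i₁)
        linarith
      have hlb : -C * T ≤ dualVal μ F m 0 := by
        rw [dualVal]
        have h1 : ∫ _x, (-C) ∂μ ≤ ∫ x, dmin F (0 : Fin (N + 1) → ℝ) x ∂μ := by
          apply integral_mono (integrable_const _) (integrable_dmin hF hFb 0)
          intro x
          refine le_dmin fun i => ?_
          have := (abs_le.1 (hFb i x)).1
          simp only [Pi.zero_apply, add_zero]
          linarith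
        rw [integral_const, smul_eq_mul] at h1
        simp only [Pi.zero_apply, zero_mul, Finset.sum_const_zero, sub_zero]
        calc -C * T = T * (-C) := by ring
        _ ≤ _ := h1
      have hRm : 2 * C * T ≤ R * mmin := by
        rw [hRdef]
        rw [add_mul, div_mul_cancel₀ _ hmminpos.ne']
        linarith
      calc dualVal μ F m β' ≤ C * T - R * mmin := hub
      _ ≤ C * T - 2 * C * T := by linarith
      _ = -C * T := by ring
      _ ≤ dualVal μ F m 0 := hlb
    exact h0le.trans (hαmax h0K)

/-- splitting the min over a nonempty proper index set -/
lemma inf'_split {I : Finset (Fin (N + 1))} (hI : I.Nonempty) (hIc : Iᶜ.Nonempty)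
    (f : Fin (N + 1) → ℝ) :
    Finset.univ.inf' Finset.univ_nonempty f = I.inf' hI f ⊓ Iᶜ.inf' hIc f := by
  rw [← Finset.inf'_union hI hIc f]
  apply le_antisymm
  · exact Finset.le_inf' _ _ fun i _ => Finset.inf'_le _ (Finset.mem_univ i)
  · refine Finset.le_inf' _ _ fun i _ => Finset.inf'_le _ ?_
    rw [Finset.union_compl]
    exact Finset.mem_univ i

/-- The group inequalities coming from dual optimality. -/
lemma group_ineq {μ : Measure X} [IsFiniteMeasure μ] {F : Fin (N + 1) → X → ℝ}
    (hF : ∀ i, Measurable (F i)) {C : ℝ} (hFb : ∀ i x, |F i x| ≤ C)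
    {m : Fin (N + 1) → ℝ} (hm : ∀ i, 0 ≤ m i) {α : Fin (N + 1) → ℝ}
    (hmax : ∀ β, dualVal μ F m β ≤ dualVal μ F m α)
    {I : Finset (Fin (N + 1))} (hI : I.Nonempty) (hIc : Iᶜ.Nonempty) :
    μ {x | I.inf' hI (fun i => F i x + α i) < Iᶜ.inf' hIc (fun i => F i x + α i)}
      ≤ ENNReal.ofReal (∑ i ∈ I, m i) := by
  classical
  set p : X → ℝ := fun x => I.inf' hI (fun i => F i x + α i) with hpdef
  set q : X → ℝ := fun x => Iᶜ.inf' hIc (fun i => F i x + α i) with hqdef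
  have hp : Measurable p := measurable_inf' hI _ (fun i => (hF i).add_const (α i))
  have hq : Measurable q := measurable_inf' hIc _ (fun i => (hF i).add_const (α i))
  have hdmin_eq : ∀ x, dmin F α x = p x ⊓ q x := by
    intro x
    exact inf'_split hI hIc (fun i => F i x + α i)
  set χ : Fin (N + 1) → ℝ := fun i => if i ∈ I then 1 else 0 with hχdef
  have hSnonneg : 0 ≤ ∑ i ∈ I, m i := Finset.sum_nonneg fun i _ => hm i
  -- the measure bound for each positive t
  have hEbound : ∀ t : ℝ, 0 < t → μ {x | p x + t ≤ q x} ≤ ENNReal.ofReal (∑ i ∈ I, m i) := by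
    intro t ht
    set αt : Fin (N + 1) → ℝ := fun i => α i + t * χ i with hαtdef
    have hdmin_t : ∀ x, dmin F αt x = (p x + t) ⊓ q x := by
      intro x
      have h0 : dmin F αt x = I.inf' hI (fun i => F i x + αt i)
          ⊓ Iᶜ.inf' hIc (fun i => F i x + αt i) :=
        inf'_split hI hIc (fun i => F i x + αt i)
      have h1 : I.inf' hI (fun i => F i x + αt i) = p x + t := by
        have : ∀ i ∈ I, F i x + αt i = (F i x + α i) + t := by
          intro i hi
          simp [hαtdef, hχdef, hi]
          ring
        rw [Finset.inf'_congr hI rfl this, inf'_add_const]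
      have h2 : Iᶜ.inf' hIc (fun i => F i x + αt i) = q x := by
        have : ∀ i ∈ Iᶜ, F i x + αt i = F i x + α i := by
          intro i hi
          have : i ∉ I := Finset.mem_compl.1 hi
          simp [hαtdef, hχdef, this]
        rw [Finset.inf'_congr hIc rfl this]
      rw [h0, h1, h2]
    have hsum_t : ∑ i, αt i * m i = (∑ i, α i * m i) + t * ∑ i ∈ I, m i := by
      have h1 : ∀ i ∈ Finset.univ, αt i * m i = α i * m i + t * (χ i * m i) := by
        intro i _; simp only [hαtdef]; ring
      rw [Finset.sum_congr rfl h1, Finset.sum_add_distrib, ← Finset.mul_sum]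
      congr 1
      congr 1
      have h2 : ∀ i ∈ Finset.univ, χ i * m i = if i ∈ I then m i else 0 := by
        intro i _
        simp only [hχdef]
        by_cases hi : i ∈ I <;> simp [hi]
      rw [Finset.sum_congr rfl h2, Finset.sum_ite_mem, Finset.univ_inter]
    have hkey := hmax αt
    rw [dualVal, dualVal, hsum_t] at hkey
    have hineq : ∫ x, dmin F αt x ∂μ - ∫ x, dmin F α x ∂μ ≤ t * ∑ i ∈ I, m i := by
      linarith
    set E : Set X := {x | p x + t ≤ q x} with hEdef
    have hEmeas : MeasurableSet E := measurableSet_le (hp.add_const t) hq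
    have hpoint : ∀ x, E.indicator (fun _ => t) x ≤ dmin F αt x - dmin F α x := by
      intro x
      rw [hdmin_t x, hdmin_eq x]
      by_cases hx : x ∈ E
      · rw [Set.indicator_of_mem hx]
        have hxE : p x + t ≤ q x := hx
        rw [min_eq_left hxE, min_eq_left (by linarith : p x ≤ q x)]
        linarith
      · rw [Set.indicator_of_notMem hx]
        have h1 : p x ⊓ q x ≤ (p x + t) ⊓ q x :=
          le_inf (inf_le_left.trans (by linarith)) inf_le_right
        linarith
    have hint : ∫ x, E.indicator (fun _ => t) x ∂μ
        ≤ ∫ x, (dmin F αt x - dmin F α x) ∂μ := by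
      apply integral_mono (Integrable.indicator (integrable_const t) hEmeas) _ hpoint
      exact (integrable_dmin hF hFb αt).sub (integrable_dmin hF hFb α)
    rw [integral_indicator_const _ hEmeas, smul_eq_mul, measureReal_def,
      integral_sub (integrable_dmin hF hFb αt) (integrable_dmin hF hFb α)] at hint
    have htoReal : (μ E).toReal ≤ ∑ i ∈ I, m i := by
      have hh := le_trans hint hineq
      exact le_of_mul_le_mul_right (by linarith) ht
    rw [ENNReal.le_ofReal_iff_toReal_le (measure_ne_top μ E) hSnonneg]
    exact htoReal
  -- take the union over t = 1/(n+1)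
  have hunion : {x | p x < q x} = ⋃ n : ℕ, {x | p x + 1 / (n + 1 : ℝ) ≤ q x} := by
    ext x
    simp only [Set.mem_setOf_eq, Set.mem_iUnion]
    constructor
    · intro h
      obtain ⟨n, hn⟩ := exists_nat_one_div_lt (by linarith : (0:ℝ) < q x - p x)
      exact ⟨n, by push_cast at hn ⊢; linarith⟩
    · rintro ⟨n, hn⟩
      have : 0 < 1 / (n + 1 : ℝ) := by positivity
      linarith
  rw [hunion]
  have hmono : Monotone (fun n : ℕ => {x | p x + 1 / (n + 1 : ℝ) ≤ q x}) := by
    intro n n' hnn' x hx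
    simp only [Set.mem_setOf_eq] at hx ⊢
    have h1 : 1 / (n' + 1 : ℝ) ≤ 1 / (n + 1 : ℝ) := by
      apply one_div_le_one_div_of_le (by positivity)
      exact_mod_cast by omega
    linarith
  rw [hmono.directed_le.measure_iUnion]
  exact iSup_le fun n => hEbound _ (by positivity)


end Dual



/-- The abstract multicomponent bathtub theorem, over an arbitrary measure space,
with an everywhere-nonnegative measurable density `ω` and bounded measurable costs. -/
theorem bathtub_abstract {X : Type*} [MeasurableSpace X] (μ₀ : Measure X)
    {N : ℕ} {ω : X → ℝ} (hω : Measurable ω) (hω0 : ∀ x, 0 ≤ ω x)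
    (hωint : Integrable ω μ₀)
    {m : Fin (N + 1) → ℝ} (hm : ∀ i, 0 < m i) (hmass : ∑ i, m i = ∫ x, ω x ∂μ₀)
    {F : Fin (N + 1) → X → ℝ} (hF : ∀ i, Measurable (F i)) {C : ℝ} (hC : 0 ≤ C)
    (hFb : ∀ i x, |F i x| ≤ C) :
    ∃ s : Fin (N + 1) → X → ℝ,
      (∀ i, Integrable (s i) μ₀) ∧ (∀ i x, 0 ≤ s i x) ∧
      (∀ i, ∫ x, s i x ∂μ₀ = m i) ∧ (∀ᵐ x ∂μ₀, ∑ i, s i x = ω x) ∧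
      ∀ s' : Fin (N + 1) → X → ℝ, (∀ i, Integrable (s' i) μ₀) →
        (∀ i, ∀ᵐ x ∂μ₀, 0 ≤ s' i x) → (∀ i, ∫ x, s' i x ∂μ₀ = m i) →
        (∀ᵐ x ∂μ₀, ∑ i, s' i x = ω x) →
        ∑ i, ∫ x, F i x * s i x ∂μ₀ ≤ ∑ i, ∫ x, F i x * s' i x ∂μ₀ := by
  classical
  -- the weighted measure
  set μ : Measure X := μ₀.withDensity (fun x => ENNReal.ofReal (ω x)) with hμdef
  have hμap : ∀ E : Set X, MeasurableSet E → μ E = ENNReal.ofReal (∫ x in E, ω x ∂μ₀) := by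
    intro E hE
    rw [hμdef, withDensity_apply _ hE,
      ← ofReal_integral_eq_lintegral_ofReal (hωint.restrict)
        (Filter.Eventually.of_forall fun x => hω0 x)]
  have hμuniv : μ Set.univ = ENNReal.ofReal (∫ x, ω x ∂μ₀) := by
    rw [hμap Set.univ MeasurableSet.univ, Measure.restrict_univ]
  haveI hμfin : IsFiniteMeasure μ :=
    ⟨by rw [hμuniv]; exact ENNReal.ofReal_lt_top⟩
  have hT : ∑ i, m i = (μ Set.univ).toReal := by
    rw [hμuniv, ENNReal.toReal_ofReal (integral_nonneg hω0), hmass]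
  -- dual maximizer
  obtain ⟨α, hα⟩ := exists_dual_max μ hF hC hFb hm hT
  -- argmin classes
  set Am : X → Finset (Fin (N + 1)) :=
    fun x => Finset.univ.filter (fun i => F i x + α i = dmin F α x) with hAmdef
  have hAm_mem : ∀ x i, i ∈ Am x ↔ F i x + α i = dmin F α x := by
    intro x i; simp [hAmdef]
  have hAm_ne : ∀ x, (Am x).Nonempty := by
    intro x
    obtain ⟨i, hi⟩ := dmin_exists F α x
    exact ⟨i, (hAm_mem x i).2 hi.symm⟩
  have hclass_meas : ∀ A : Finset (Fin (N + 1)), MeasurableSet {x | Am x = A} := by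
    intro A
    have heq : {x | Am x = A} = ⋂ i, (if i ∈ A then {x | F i x + α i = dmin F α x}
        else {x | F i x + α i = dmin F α x}ᶜ) := by
      ext x
      simp only [Set.mem_setOf_eq, Set.mem_iInter]
      constructor
      · intro hx i
        by_cases hiA : i ∈ A
        · rw [if_pos hiA]
          exact (hAm_mem x i).1 (hx ▸ hiA)
        · rw [if_neg hiA]
          intro hcon
          exact hiA (hx ▸ (hAm_mem x i).2 hcon)
      · intro hx
        apply Finset.ext
        intro i
        rw [hAm_mem x i]
        constructor
        · intro h
          by_contra hiA
          have := hx i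
          rw [if_neg hiA] at this
          exact this h
        · intro hiA
          have := hx i
          rw [if_pos hiA] at this
          exact this
    rw [heq]
    apply MeasurableSet.iInter
    intro i
    by_cases hiA : i ∈ A
    · rw [if_pos hiA]
      exact measurableSet_eq_fun ((hF i).add_const (α i)) (measurable_dmin hF α)
    · rw [if_neg hiA]
      exact (measurableSet_eq_fun ((hF i).add_const (α i)) (measurable_dmin hF α)).compl
  -- the key cut inequalities
  have hcutkey : ∀ I : Finset (Fin (N + 1)),
      μ {x | Am x ⊆ I} ≤ ENNReal.ofReal (∑ i ∈ I, m i) := by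
    intro I
    by_cases hIuniv : I = Finset.univ
    · subst hIuniv
      have : {x | Am x ⊆ Finset.univ} = Set.univ := by
        ext x; simp [Finset.subset_univ]
      rw [this, hμuniv, ← hmass]
    · have hIc : Iᶜ.Nonempty := by
        rw [Finset.nonempty_iff_ne_empty]
        intro h
        have h2 := congrArg compl h
        rw [compl_compl, Finset.compl_empty] at h2
        exact hIuniv h2
      by_cases hIe : I = ∅
      · subst hIe
        have : {x | Am x ⊆ ∅} = ∅ := by
          ext x
          simp only [Set.mem_setOf_eq, Set.mem_empty_iff_false, iff_false]
          intro h
          obtain ⟨i, hi⟩ := hAm_ne x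
          exact absurd (h hi) (Finset.notMem_empty i)
        rw [this, measure_empty]
        exact bot_le
      · have hI : I.Nonempty := Finset.nonempty_iff_ne_empty.2 hIe
        have hset : {x | Am x ⊆ I}
            = {x | I.inf' hI (fun i => F i x + α i) < Iᶜ.inf' hIc (fun i => F i x + α i)} := by
          ext x
          simp only [Set.mem_setOf_eq]
          set p : ℝ := I.inf' hI (fun i => F i x + α i) with hp
          set q : ℝ := Iᶜ.inf' hIc (fun i => F i x + α i) with hq
          have hdp : dmin F α x ≤ p := Finset.le_inf' _ _ fun i _ => dmin_le F α x i
          have hdq : dmin F α x ≤ q := Finset.le_inf' _ _ fun i _ => dmin_le F α x i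
          constructor
          · intro hsub
            obtain ⟨j, hj, hjq⟩ := Finset.exists_mem_eq_inf' hIc (fun i => F i x + α i)
            have hjI : j ∉ I := Finset.mem_compl.1 hj
            have hjne : F j x + α j ≠ dmin F α x := by
              intro heq
              exact hjI (hsub ((hAm_mem x j).2 heq))
            have hdq' : dmin F α x < q := by
              rw [hq, hjq]
              exact lt_of_le_of_ne (dmin_le F α x j) (Ne.symm hjne)
            by_contra hpq
            push_neg at hpq
            -- q ≤ p, so dmin = min over everything ≥ ... in fact dmin is attained
            obtain ⟨i, hieq⟩ := dmin_exists F α x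
            by_cases hiI : i ∈ I
            · have : p ≤ F i x + α i := Finset.inf'_le _ hiI
              have h2 : q ≤ p := hpq
              rw [← hieq] at this
              linarith
            · have : q ≤ F i x + α i := Finset.inf'_le _ (Finset.mem_compl.2 hiI)
              rw [← hieq] at this
              linarith
          · intro hpq
            intro i hi
            have hieq := (hAm_mem x i).1 hi
            by_contra hiI
            have hqle : q ≤ F i x + α i := Finset.inf'_le _ (Finset.mem_compl.2 hiI)
            -- dmin = p since p is attained inside I... use p ≥ dmin and dmin = F i + α i ≥ q > p
            rw [hieq] at hqle
            have : q ≤ p := hqle.trans hdp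
            linarith
        rw [hset]
        exact group_ineq hF hFb (fun i => (hm i).le) hα hI hIc
  -- set up the Gale transportation problem
  set a : Finset (Fin (N + 1)) → ℝ := fun A => (μ {x | Am x = A}).toReal with hadef
  have ha_zero_iff : ∀ A, a A = 0 ↔ μ {x | Am x = A} = 0 := by
    intro A
    rw [hadef]
    constructor
    · intro h
      exact (ENNReal.toReal_eq_zero_iff _).1 h |>.resolve_right (measure_ne_top μ _)
    · intro h
      show (μ {x | Am x = A}).toReal = 0
      rw [h, ENNReal.toReal_zero]
  have hclass_disj : ∀ A B : Finset (Fin (N + 1)), A ≠ B →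
      Disjoint {x | Am x = A} {x | Am x = B} := by
    intro A B hAB
    apply Set.disjoint_left.2
    intro x hxA hxB
    exact hAB (hxA.symm.trans hxB)
  have hcutSum : ∀ I : Finset (Fin (N + 1)),
      BathtubGale.cutSum a I = (μ {x | Am x ⊆ I}).toReal := by
    intro I
    have hunion : {x | Am x ⊆ I}
        = ⋃ A ∈ Finset.univ.filter (fun A : Finset (Fin (N + 1)) => A ⊆ I),
          {x | Am x = A} := by
      ext x
      simp only [Set.mem_setOf_eq, Set.mem_iUnion, Finset.mem_filter, Finset.mem_univ,
        true_and]
      constructor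
      · intro h; exact ⟨Am x, h, rfl⟩
      · rintro ⟨A, hA, rfl⟩; exact hA
    rw [BathtubGale.cutSum, hunion, measure_biUnion_finset ?_ (fun A _ => hclass_meas A)]
    · rw [ENNReal.toReal_sum (fun A _ => measure_ne_top μ _)]
    · intro A hA B hB hAB
      exact hclass_disj A B hAB
  have hD : BathtubGale.GaleData Finset.univ a m := by
    constructor
    · intro A; exact ENNReal.toReal_nonneg
    · intro A hA
      refine ⟨?_, Finset.subset_univ A⟩
      rw [Finset.nonempty_iff_ne_empty]
      rintro rfl
      apply hA
      rw [ha_zero_iff]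
      have : {x | Am x = ∅} = ∅ := by
        ext x
        simp only [Set.mem_setOf_eq, Set.mem_empty_iff_false, iff_false]
        intro h
        exact Finset.Nonempty.ne_empty (hAm_ne x) h
      rw [this, measure_empty]
    · exact fun i => (hm i).le
    · intro I _
      rw [hcutSum I]
      exact ENNReal.toReal_le_of_le_ofReal
        (Finset.sum_nonneg fun i _ => (hm i).le) (hcutkey I)
    · rw [hcutSum Finset.univ]
      have : {x | Am x ⊆ Finset.univ} = Set.univ := by
        ext x; simp [Finset.subset_univ]
      rw [this, ← hT]
  obtain ⟨xf, hxf⟩ := BathtubGale.gale Finset.univ a m hD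
  -- build the optimal configuration
  set c : Finset (Fin (N + 1)) → Fin (N + 1) → ℝ :=
    fun A i => if a A = 0 then 0 else xf A i / a A with hcdef
  have hc_nonneg : ∀ A i, 0 ≤ c A i := by
    intro A i
    rw [hcdef]
    by_cases h : a A = 0
    · simp [h]
    · simp only [if_neg h]
      exact div_nonneg (hxf.nonneg A i) (hD.ha A)
  have hc_mem : ∀ A i, c A i ≠ 0 → i ∈ A := by
    intro A i h
    by_contra hiA
    apply h
    rw [hcdef]
    by_cases h2 : a A = 0
    · simp [h2]
    · simp only [if_neg h2]
      rw [hxf.supp A i hiA, zero_div]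
  have hc_sum : ∀ A, a A ≠ 0 → ∑ i, c A i = 1 := by
    intro A hA
    rw [hcdef]
    simp only [if_neg hA]
    rw [← Finset.sum_div, hxf.row A, div_self hA]
  have hca : ∀ A i, c A i * a A = xf A i := by
    intro A i
    rw [hcdef]
    by_cases h : a A = 0
    · simp only [if_pos h, zero_mul]
      exact (hxf.row_zero h i).symm
    · simp only [if_neg h]
      rw [div_mul_cancel₀ _ h]
  set s : Fin (N + 1) → X → ℝ := fun i x => c (Am x) i * ω x with hsdef

  -- measurability of the coefficient functions
  have hu_meas : ∀ i, Measurable (fun x => c (Am x) i) := by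
    intro i
    have heq : (fun x => c (Am x) i)
        = fun x => ∑ A : Finset (Fin (N + 1)),
            Set.indicator {y | Am y = A} (fun _ => c A i) x := by
      funext x
      have h1 : ∀ A ∈ (Finset.univ : Finset (Finset (Fin (N + 1)))),
          Set.indicator {y | Am y = A} (fun _ => c A i) x
            = if Am x = A then c A i else 0 := by
        intro A _
        rw [Set.indicator_apply]
        simp only [Set.mem_setOf_eq]
      rw [Finset.sum_congr rfl h1, Finset.sum_ite_eq Finset.univ (Am x) (fun A => c A i)]
      simp
    rw [heq]
    apply Finset.measurable_sum
    intro A _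
    exact measurable_const.indicator (hclass_meas A)
  have hs_meas : ∀ i, Measurable (s i) := fun i => (hu_meas i).mul hω
  have hs_nonneg : ∀ i x, 0 ≤ s i x := fun i x => mul_nonneg (hc_nonneg _ i) (hω0 x)
  have hs_int : ∀ i, Integrable (s i) μ₀ := by
    intro i
    apply hωint.bdd_mul (c := Finset.univ.sup' Finset.univ_nonempty (fun A => |c A i|)) (hu_meas i).aestronglyMeasurable
    refine Filter.Eventually.of_forall fun x => ?_
    rw [Real.norm_eq_abs]
    exact Finset.le_sup' (fun A => |c A i|) (Finset.mem_univ (Am x))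
  -- the integral of ω over each class
  have hclass_int : ∀ A : Finset (Fin (N + 1)),
      ∫ x in {x | Am x = A}, ω x ∂μ₀ = a A := by
    intro A
    show _ = (μ {x | Am x = A}).toReal
    rw [hμap _ (hclass_meas A), ENNReal.toReal_ofReal (integral_nonneg fun x => hω0 x)]
  -- the masses of the phases
  have hs_integral : ∀ i, ∫ x, s i x ∂μ₀ = m i := by
    intro i
    have hrep : s i = fun x => ∑ A : Finset (Fin (N + 1)),
        Set.indicator {y | Am y = A} (fun y => c A i * ω y) x := by
      funext x
      have h1 : ∀ A ∈ (Finset.univ : Finset (Finset (Fin (N + 1)))),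
          Set.indicator {y | Am y = A} (fun y => c A i * ω y) x
            = if Am x = A then c A i * ω x else 0 := by
        intro A _
        rw [Set.indicator_apply]
        simp only [Set.mem_setOf_eq]
      show c (Am x) i * ω x = _
      rw [Finset.sum_congr rfl h1,
        Finset.sum_ite_eq Finset.univ (Am x) (fun A => c A i * ω x)]
      simp
    rw [hrep, integral_finset_sum _
      (fun A _ => (hωint.const_mul (c A i)).indicator (hclass_meas A))]
    have h2 : ∀ A ∈ (Finset.univ : Finset (Finset (Fin (N + 1)))),
        ∫ x, Set.indicator {y | Am y = A} (fun y => c A i * ω y) x ∂μ₀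
          = xf A i := by
      intro A _
      rw [integral_indicator (hclass_meas A), integral_const_mul, hclass_int A, hca A i]
    rw [Finset.sum_congr rfl h2]
    exact hxf.col i (Finset.mem_univ i)
  -- the a.e. saturation property
  have hbad : ∀ᵐ x ∂μ₀, ∀ A : Finset (Fin (N + 1)), a A = 0 → Am x = A → ω x = 0 := by
    rw [ae_all_iff]
    intro A
    by_cases hA : a A = 0
    · have hμA : μ {x | Am x = A} = 0 := (ha_zero_iff A).1 hA
      have hlint : ∫⁻ x in {x | Am x = A}, ENNReal.ofReal (ω x) ∂μ₀ = 0 := by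
        rw [← withDensity_apply _ (hclass_meas A)]
        exact hμA
      have hae0 : ∀ᵐ x ∂(μ₀.restrict {x | Am x = A}), ENNReal.ofReal (ω x) = 0 := by
        have := (lintegral_eq_zero_iff hω.ennreal_ofReal).1 hlint
        filter_upwards [this] with x hx
        exact hx
      have hall := (ae_restrict_iff' (hclass_meas A)).1 hae0
      filter_upwards [hall] with x hx hA' hxA
      have h0 : ENNReal.ofReal (ω x) = 0 := hx hxA
      have h1 : ω x ≤ 0 := ENNReal.ofReal_eq_zero.1 h0
      exact le_antisymm h1 (hω0 x)
    · exact Filter.Eventually.of_forall fun x hc => absurd hc hA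
  have hs_sum : ∀ᵐ x ∂μ₀, ∑ i, s i x = ω x := by
    filter_upwards [hbad] with x hx
    by_cases hA : a (Am x) = 0
    · have hω0x : ω x = 0 := hx (Am x) hA rfl
      show ∑ i, c (Am x) i * ω x = ω x
      rw [hω0x]
      simp
    · show ∑ i, c (Am x) i * ω x = ω x
      rw [← Finset.sum_mul, hc_sum (Am x) hA, one_mul]
  -- optimality via weak duality
  set hd : X → ℝ := dmin F α with hhdef
  have hh_meas : Measurable hd := measurable_dmin hF α
  set D : ℝ := C + Finset.univ.sup' Finset.univ_nonempty (fun i => |α i|) with hDdef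
  have hh_bd : ∀ x, |hd x| ≤ D := abs_dmin_le hFb α
  have hmulint : ∀ (G : X → ℝ), Measurable G → ∀ D' : ℝ, (∀ x, |G x| ≤ D') →
      ∀ (t : X → ℝ), Integrable t μ₀ → Integrable (fun x => G x * t x) μ₀ := by
    intro G hG D' hD' t ht
    exact ht.bdd_mul (c := D') hG.aestronglyMeasurable
      (Filter.Eventually.of_forall fun x => by rw [Real.norm_eq_abs]; exact hD' x)
  -- key lower bound for any feasible configuration
  have hkey : ∀ (t : Fin (N + 1) → X → ℝ), (∀ i, Integrable (t i) μ₀) →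
      (∀ i, ∀ᵐ x ∂μ₀, 0 ≤ t i x) → (∀ i, ∫ x, t i x ∂μ₀ = m i) →
      (∀ᵐ x ∂μ₀, ∑ i, t i x = ω x) →
      (∫ x, hd x * ω x ∂μ₀) - ∑ i, α i * m i ≤ ∑ i, ∫ x, F i x * t i x ∂μ₀ := by
    intro t htint htpos htm htsum
    have hht_int : ∀ i, Integrable (fun x => hd x * t i x) μ₀ :=
      fun i => hmulint hd hh_meas D hh_bd _ (htint i)
    have hFt_int : ∀ i, Integrable (fun x => F i x * t i x) μ₀ :=
      fun i => hmulint (F i) (hF i) C (hFb i) _ (htint i)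
    have hgt_int : ∀ i, Integrable (fun x => (F i x + α i) * t i x) μ₀ := by
      intro i
      apply hmulint _ ((hF i).add_const (α i)) (C + |α i|) _ _ (htint i)
      intro x
      calc |F i x + α i| ≤ |F i x| + |α i| := abs_add_le _ _
      _ ≤ C + |α i| := by linarith [hFb i x]
    have hstepa : ∀ i, ∫ x, hd x * t i x ∂μ₀ ≤ ∫ x, (F i x + α i) * t i x ∂μ₀ := by
      intro i
      apply integral_mono_ae (hht_int i) (hgt_int i)
      filter_upwards [htpos i] with x hx
      exact mul_le_mul_of_nonneg_right (dmin_le F α x i) hx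
    have hstepb : ∀ i, ∫ x, (F i x + α i) * t i x ∂μ₀
        = (∫ x, F i x * t i x ∂μ₀) + α i * m i := by
      intro i
      have hfe : (fun x => (F i x + α i) * t i x)
          = fun x => F i x * t i x + α i * t i x := by
        funext x; ring
      rw [hfe, integral_add (hFt_int i) ((htint i).const_mul (α i)),
        integral_const_mul, htm i]
    have hstepc : ∑ i, ∫ x, hd x * t i x ∂μ₀ = ∫ x, hd x * ω x ∂μ₀ := by
      rw [← integral_finset_sum _ (fun i _ => hht_int i)]
      apply integral_congr_ae
      filter_upwards [htsum] with x hx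
      rw [← Finset.mul_sum, hx]
    have hfin : ∑ i, ∫ x, hd x * t i x ∂μ₀
        ≤ ∑ i, ((∫ x, F i x * t i x ∂μ₀) + α i * m i) := by
      apply Finset.sum_le_sum
      intro i _
      rw [← hstepb i]
      exact hstepa i
    rw [hstepc, Finset.sum_add_distrib] at hfin
    linarith
  -- the value of the candidate equals the dual value
  have hseq : ∑ i, ∫ x, F i x * s i x ∂μ₀
      = (∫ x, hd x * ω x ∂μ₀) - ∑ i, α i * m i := by
    have hpoint : ∀ i x, F i x * s i x = hd x * s i x - α i * s i x := by
      intro i x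
      by_cases hs0 : s i x = 0
      · rw [hs0]; ring
      · have hci : c (Am x) i ≠ 0 := by
          intro h0
          apply hs0
          show c (Am x) i * ω x = 0
          rw [h0, zero_mul]
        have hiA : i ∈ Am x := hc_mem _ i hci
        have heq := (hAm_mem x i).1 hiA
        have hF_eq : F i x = hd x - α i := by
          rw [hhdef]; linarith
        rw [hF_eq]; ring
    have hper : ∀ i, ∫ x, F i x * s i x ∂μ₀
        = (∫ x, hd x * s i x ∂μ₀) - α i * m i := by
      intro i
      rw [integral_congr_ae (Filter.Eventually.of_forall (hpoint i)),
        integral_sub (hmulint hd hh_meas D hh_bd _ (hs_int i))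
          ((hs_int i).const_mul (α i)),
        integral_const_mul, hs_integral i]
    have hsumc : ∑ i, ∫ x, hd x * s i x ∂μ₀ = ∫ x, hd x * ω x ∂μ₀ := by
      rw [← integral_finset_sum _
        (fun i _ => hmulint hd hh_meas D hh_bd _ (hs_int i))]
      apply integral_congr_ae
      filter_upwards [hs_sum] with x hx
      rw [← Finset.mul_sum, hx]
    rw [Finset.sum_congr rfl (fun i _ => hper i), Finset.sum_sub_distrib, hsumc]
  refine ⟨s, hs_int, hs_nonneg, hs_integral, hs_sum, ?_⟩
  intro s' hint' hpos' hmass' hsum'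
  rw [hseq]
  exact hkey s' hint' hpos' hmass' hsum'


end Bathtub


/-- The feasible set `𝒳 ∩ 𝒜` of the multicomponent bathtub problem: vectors of
nonnegative integrable phase contents with prescribed masses `m i` whose sum
saturates the constraint `ω` almost everywhere on `Ω`. -/
def feasible {d N : ℕ} (Ω : Set (Fin d → ℝ)) (ω : (Fin d → ℝ) → ℝ)
    (m : Fin (N + 1) → ℝ) (s : Fin (N + 1) → (Fin d → ℝ) → ℝ) : Prop :=
  (∀ i, IntegrableOn (s i) Ω) ∧
  (∀ i, ∀ᵐ x ∂(volume.restrict Ω), 0 ≤ s i x) ∧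
  (∀ i, ∫ x in Ω, s i x = m i) ∧
  (∀ᵐ x ∂(volume.restrict Ω), ∑ i, s i x = ω x)

/-- The primal linear functional `𝓕(s) = Σ_i ∫_Ω F_i s_i dx`. -/
noncomputable def primalF {d N : ℕ} (Ω : Set (Fin d → ℝ))
    (F : Fin (N + 1) → (Fin d → ℝ) → ℝ)
    (s : Fin (N + 1) → (Fin d → ℝ) → ℝ) : ℝ :=
  ∑ i, ∫ x in Ω, F i x * s i x

/-- The dual functional `J(α) = ∫_Ω (min_j (F_j + α_j)) ω dx − Σ_i α_i m_i`. -/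
noncomputable def dualJ {d N : ℕ} (Ω : Set (Fin d → ℝ)) (ω : (Fin d → ℝ) → ℝ)
    (F : Fin (N + 1) → (Fin d → ℝ) → ℝ) (m : Fin (N + 1) → ℝ)
    (α : Fin (N + 1) → ℝ) : ℝ :=
  (∫ x in Ω, (⨅ j, (F j x + α j)) * ω x) - ∑ i, α i * m i

/-- Multicomponent bathtub principle, existence part: the linear functional
admits a minimizer over the constraint set. -/
theorem stmt_10 {d N : ℕ}
    (Ω : Set (Fin d → ℝ)) (hΩ : MeasurableSet Ω)
    (ω : (Fin d → ℝ) → ℝ) (hωint : IntegrableOn ω Ω)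
    (hω0 : ∀ᵐ x ∂(volume.restrict Ω), 0 ≤ ω x)
    (m : Fin (N + 1) → ℝ) (hm : ∀ i, 0 < m i)
    (hmass : ∑ i, m i = ∫ x in Ω, ω x)
    (F : Fin (N + 1) → (Fin d → ℝ) → ℝ)
    (hFmeas : ∀ i, AEStronglyMeasurable (F i) (volume.restrict Ω))
    (hFbdd : ∃ C : ℝ, ∀ i, ∀ᵐ x ∂(volume.restrict Ω), |F i x| ≤ C) :
    ∃ sb : Fin (N + 1) → (Fin d → ℝ) → ℝ,
      feasible Ω ω m sb ∧
      ∀ s, feasible Ω ω m s → primalF Ω F sb ≤ primalF Ω F s := by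
  classical
  obtain ⟨C₀, hC₀⟩ := hFbdd
  set C : ℝ := max C₀ 0 with hCdef
  have hC : 0 ≤ C := le_max_right _ _
  -- measurable nonnegative representative of ω
  set ω' : (Fin d → ℝ) → ℝ := fun x => max (hωint.1.mk ω x) 0 with hω'def
  have hω'meas : Measurable ω' :=
    (hωint.1.stronglyMeasurable_mk.measurable).max measurable_const
  have hω'eq : ω' =ᵐ[volume.restrict Ω] ω := by
    filter_upwards [hωint.1.ae_eq_mk, hω0] with x h1 h2
    show max (hωint.1.mk ω x) 0 = ω x
    rw [← h1]
    exact max_eq_left h2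
  have hω'0 : ∀ x, 0 ≤ ω' x := fun x => le_max_right _ _
  have hω'int : Integrable ω' (volume.restrict Ω) := hωint.congr hω'eq.symm
  -- measurable bounded representatives of F
  set F' : Fin (N + 1) → (Fin d → ℝ) → ℝ :=
    fun i x => max (-C) (min C ((hFmeas i).mk (F i) x)) with hF'def
  have hF'meas : ∀ i, Measurable (F' i) := fun i =>
    measurable_const.max (measurable_const.min
      ((hFmeas i).stronglyMeasurable_mk.measurable))
  have hF'b : ∀ i x, |F' i x| ≤ C := by
    intro i x
    rw [abs_le]
    refine ⟨le_max_left _ _, max_le (by linarith) (min_le_left _ _)⟩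
  have hF'eq : ∀ i, F' i =ᵐ[volume.restrict Ω] F i := by
    intro i
    filter_upwards [(hFmeas i).ae_eq_mk, hC₀ i] with x h1 h2
    show max (-C) (min C ((hFmeas i).mk (F i) x)) = F i x
    rw [← h1]
    have habs : |F i x| ≤ C := le_trans h2 (le_max_left _ _)
    rw [min_eq_right (abs_le.1 habs).2, max_eq_right (abs_le.1 habs).1]
  have hmass' : ∑ i, m i = ∫ x, ω' x ∂(volume.restrict Ω) := by
    rw [integral_congr_ae hω'eq]
    exact hmass
  obtain ⟨s, hs1, hs2, hs3, hs4, hs5⟩ :=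
    Bathtub.bathtub_abstract (volume.restrict Ω) hω'meas hω'0 hω'int hm hmass'
      hF'meas hC hF'b
  have hconv : ∀ u : Fin (N + 1) → (Fin d → ℝ) → ℝ, ∀ i,
      ∫ x, F' i x * u i x ∂(volume.restrict Ω) = ∫ x in Ω, F i x * u i x := by
    intro u i
    apply integral_congr_ae
    filter_upwards [hF'eq i] with x h1
    rw [h1]
  refine ⟨s, ⟨hs1, fun i => Filter.Eventually.of_forall (hs2 i), hs3, ?_⟩, ?_⟩
  · filter_upwards [hs4, hω'eq] with x h1 h2
    exact h1.trans h2
  · intro t ht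
    obtain ⟨ht1, ht2, ht3, ht4⟩ := ht
    have ht4' : ∀ᵐ x ∂(volume.restrict Ω), ∑ i, t i x = ω' x := by
      filter_upwards [ht4, hω'eq] with x h1 h2
      exact h1.trans h2.symm
    have hmain := hs5 t ht1 ht2 ht3 ht4'
    rw [primalF, primalF]
    calc ∑ i, ∫ x in Ω, F i x * s i x
        = ∑ i, ∫ x, F' i x * s i x ∂(volume.restrict Ω) :=
          Finset.sum_congr rfl fun i _ => (hconv s i).symm
      _ ≤ ∑ i, ∫ x, F' i x * t i x ∂(volume.restrict Ω) := hmain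
      _ = ∑ i, ∫ x in Ω, F i x * t i x :=
          Finset.sum_congr rfl fun i _ => hconv t i
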